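/- Let F²_X and F²_Y be the integrated CDFs of discrete random variables X and Y supported on [a,b]. If the function Γ(t) = F²_Y(t) - F²_X(t) satisfies Γ(y_i) ≥ 0 for every value y_i of Y with y_i ≤ r, then Γ(t) ≥ 0 for all t ∈ [a, r], provided additionally that Γ is nonneg at r (i.e., when r is itself one of the y_i). Formally: if Y takes values y_1 ≤ ... ≤ y_n, r = y_j for some j, and F²_Y(y_i) ≥ F²_X(y_i) for all i with y_i ≤ r, then F²_Y(t) ≥ F²_X(t) for all t ∈ [a, r]. -/

import Mathlib

lemma convl (c s t u l : ℝ) (hl0 : 0 ≤ l) (hl1 : l ≤ 1)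
    (ht : t = l * s + (1 - l) * u) :
    max (t - c) 0 ≤ l * max (s - c) 0 + (1 - l) * max (u - c) 0 := by
  have h1 : s - c ≤ max (s - c) 0 := le_max_left _ _
  have h2 : u - c ≤ max (u - c) 0 := le_max_left _ _
  have h3 : (0:ℝ) ≤ max (s - c) 0 := le_max_right _ _
  have h4 : (0:ℝ) ≤ max (u - c) 0 := le_max_right _ _
  have hl1' : (0:ℝ) ≤ 1 - l := by linarith
  apply max_le
  · nlinarith [mul_le_mul_of_nonneg_left h1 hl0, mul_le_mul_of_nonneg_left h2 hl1']
  · nlinarith [mul_nonneg hl0 h3, mul_nonneg hl1' h4]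

lemma concly (c s t u l : ℝ) (hl0 : 0 ≤ l) (hl1 : l ≤ 1)
    (ht : t = l * s + (1 - l) * u) (hst : s ≤ t) (htu : t ≤ u)
    (hc : c ≤ s ∨ u ≤ c) :
    l * max (s - c) 0 + (1 - l) * max (u - c) 0 ≤ max (t - c) 0 := by
  rcases hc with h | h
  · rw [max_eq_left (by linarith : (0:ℝ) ≤ s - c),
        max_eq_left (by linarith : (0:ℝ) ≤ u - c),
        max_eq_left (by linarith : (0:ℝ) ≤ t - c)]
    nlinarith [ht]
  · rw [max_eq_right (by linarith : s - c ≤ (0:ℝ)),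
        max_eq_right (by linarith : u - c ≤ (0:ℝ)),
        max_eq_right (by linarith : t - c ≤ (0:ℝ))]
    simp

/-- If Y takes sorted values y_1 ≤ ... ≤ y_n in [a,b], the reference
point r equals some y_j, and F²_Y(y_i) ≥ F²_X(y_i) for all i with y_i ≤ r,
then F²_Y(t) ≥ F²_X(t) for all t ∈ [a, r], where F²_Z(t) = Σ_i p_i max{t - z_i, 0}. -/
theorem stmt_3 (n : ℕ) (p x y : Fin n → ℝ) (a b r : ℝ) (j : Fin n)
    (hp : ∀ i, 0 ≤ p i) (hsum : ∑ i, p i = 1)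
    (hx : ∀ i, x i ∈ Set.Icc a b) (hy : ∀ i, y i ∈ Set.Icc a b)
    (hsorted : Monotone y) (hr : r = y j)
    (hloss : ∀ i, y i ≤ r →
      (∑ k, p k * max (y i - x k) 0) ≤ ∑ k, p k * max (y i - y k) 0) :
    ∀ t ∈ Set.Icc a r,
      (∑ k, p k * max (t - x k) 0) ≤ ∑ k, p k * max (t - y k) 0 := by
  rintro t ⟨hat, htr⟩
  by_cases hty : ∃ i, y i = t
  · obtain ⟨i, hi⟩ := hty
    have h := hloss i (by rw [hi]; exact htr)
    rwa [hi] at h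
  push_neg at hty
  by_cases hta : t = a
  · subst hta
    have hL : (∑ k, p k * max (t - x k) 0) = 0 := by
      apply Finset.sum_eq_zero; intro k _
      have := (hx k).1
      rw [max_eq_right (by linarith)]; ring
    rw [hL]
    exact Finset.sum_nonneg fun k _ => mul_nonneg (hp k) (le_max_right _ _)
  -- choose s
  obtain ⟨s, hs_lt, hΓs, hsk⟩ :
      ∃ s, s < t ∧ ((∑ k, p k * max (s - x k) 0) ≤ ∑ k, p k * max (s - y k) 0)
        ∧ ∀ k, y k ≤ t → y k ≤ s := by
    by_cases hS : ∃ i, y i ≤ t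
    · have hne : (Finset.univ.filter (fun i => y i ≤ t)).Nonempty := by
        obtain ⟨i, hi⟩ := hS
        exact ⟨i, by simp [hi]⟩
      obtain ⟨i₀, hi₀mem, hi₀max⟩ := Finset.exists_max_image _ y hne
      have hi₀t : y i₀ ≤ t := by simpa using hi₀mem
      refine ⟨y i₀, lt_of_le_of_ne hi₀t (hty i₀), hloss i₀ (le_trans hi₀t htr), ?_⟩
      intro k hk
      exact hi₀max k (by simp [hk])
    · push_neg at hS
      refine ⟨a, lt_of_le_of_ne hat (Ne.symm hta), ?_, fun k hk => absurd hk (not_le.mpr (hS k))⟩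
      have hL : (∑ k, p k * max (a - x k) 0) = 0 := by
        apply Finset.sum_eq_zero; intro k _
        have := (hx k).1
        rw [max_eq_right (by linarith)]; ring
      rw [hL]
      exact Finset.sum_nonneg fun k _ => mul_nonneg (hp k) (le_max_right _ _)
  -- choose u
  have hTne : (Finset.univ.filter (fun i => t ≤ y i)).Nonempty :=
    ⟨j, by simp [← hr, htr]⟩
  obtain ⟨m, hmmem, hmmin⟩ := Finset.exists_min_image _ y hTne
  have hmt : t ≤ y m := by simpa using hmmem
  set u := y m with hu
  have htu : t < u := lt_of_le_of_ne hmt (fun h => hty m h.symm)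
  have hΓu : (∑ k, p k * max (u - x k) 0) ≤ ∑ k, p k * max (u - y k) 0 := by
    apply hloss m
    rw [hr]
    have : j ∈ Finset.univ.filter (fun i => t ≤ y i) := by simp [← hr, htr]
    exact hmmin j this
  have huk : ∀ k, ¬ (y k ≤ s) → u ≤ y k := by
    intro k hk
    have h1 : t < y k := by
      by_contra h
      exact hk (hsk k (le_of_not_gt h))
    exact hmmin k (by simp [le_of_lt h1])
  set l := (u - t) / (u - s) with hl
  have hus : 0 < u - s := by linarith
  have hl0 : 0 ≤ l := div_nonneg (by linarith) (le_of_lt hus)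
  have hl1 : l ≤ 1 := by
    rw [div_le_one hus]; linarith
  have hteq : t = l * s + (1 - l) * u := by
    rw [hl]; field_simp [hus.ne']
    ring
  calc (∑ k, p k * max (t - x k) 0)
      ≤ ∑ k, p k * (l * max (s - x k) 0 + (1 - l) * max (u - x k) 0) := by
        apply Finset.sum_le_sum
        intro k _
        exact mul_le_mul_of_nonneg_left (convl (x k) s t u l hl0 hl1 hteq) (hp k)
    _ = l * (∑ k, p k * max (s - x k) 0) + (1 - l) * (∑ k, p k * max (u - x k) 0) := by
        rw [Finset.mul_sum, Finset.mul_sum, ← Finset.sum_add_distrib]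
        congr 1; ext k; ring
    _ ≤ l * (∑ k, p k * max (s - y k) 0) + (1 - l) * (∑ k, p k * max (u - y k) 0) := by
        gcongr <;> linarith
    _ = ∑ k, p k * (l * max (s - y k) 0 + (1 - l) * max (u - y k) 0) := by
        rw [Finset.mul_sum, Finset.mul_sum, ← Finset.sum_add_distrib]
        congr 1; ext k; ring
    _ ≤ ∑ k, p k * max (t - y k) 0 := by
        apply Finset.sum_le_sum
        intro k _
        apply mul_le_mul_of_nonneg_left _ (hp k)
        apply concly (y k) s t u l hl0 hl1 hteq (le_of_lt hs_lt) (le_of_lt htu)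
        by_cases hk : y k ≤ s
        · exact Or.inl hk
        · exact Or.inr (huk k hk)
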